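/- Let X be a countable type, D ≥ 1, and let g ∈ ℝ^D have every coordinate strictly positive. Then there exist a function φ : X → ℝ^D and a real number ε > 0 such that the map h sending a pair (x, M) — where x ∈ X and M is a finite multiset over X — to h(x, M) = (1 + ε) • φ(x) + g ⊙ (∑_{m ∈ M} φ(m)) ∈ ℝ^D is injective on X × {finite multisets over X}. Consequently, for any injective ψ : ℝ^D → ℝ^{D'}, the composed aggregation (x, M) ↦ ψ(h(x, M)) is an injective function of the pair consisting of the center element and the neighbor multiset. -/

import Mathlib

open Cardinal in
lemma exists_li_seq : ∃ B : ℕ → ℝ, LinearIndependent ℚ B := by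
  have h : (ℵ₀ : Cardinal) ≤ Module.rank ℚ ℝ := by
    rw [Real.rank_rat_real]; exact aleph0_le_continuum
  obtain ⟨s, hs, hli⟩ := le_rank_iff_exists_linearIndependent.mp h
  rw [← Cardinal.mk_nat] at hs
  obtain ⟨f⟩ := Cardinal.eq.mp hs.symm
  exact ⟨fun n => (f n : ℝ), hli.comp f f.injective⟩

lemma lc_multiset (B : ℕ → ℝ) (N : Multiset ℕ) :
    Finsupp.linearCombination ℚ B
      (Finsupp.mapRange (Nat.cast : ℕ → ℚ) Nat.cast_zero (Multiset.toFinsupp N))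
      = (N.map B).sum := by
  induction N using Multiset.induction_on with
  | empty => simp
  | cons a N ih =>
    have : (a ::ₘ N) = {a} + N := by rw [Multiset.singleton_add]
    rw [this, Multiset.toFinsupp_add, Finsupp.mapRange_add (by exact Nat.cast_add),
      map_add, ih, Multiset.toFinsupp_singleton]
    simp [Rat.smul_def]

lemma key_inj {X : Type*} (B : ℕ → ℝ) (hB : LinearIndependent ℚ B)
    (e : X → ℕ) (he : Function.Injective e) (q : ℚ) (hq : ∀ z : ℤ, (z : ℚ) ≠ q) :
    Function.Injective (fun p : X × Multiset X =>
      (q : ℝ) * B (e p.1) + ((p.2.map (fun m => B (e m))).sum)) := by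
  set cf : X × Multiset X → (ℕ →₀ ℚ) := fun p =>
    Finsupp.single (e p.1) q +
      Finsupp.mapRange (Nat.cast : ℕ → ℚ) Nat.cast_zero (Multiset.toFinsupp (p.2.map e))
    with hcf
  have hval : ∀ p : X × Multiset X,
      Finsupp.linearCombination ℚ B (cf p)
        = (q : ℝ) * B (e p.1) + ((p.2.map (fun m => B (e m))).sum) := by
    intro p
    rw [hcf, map_add, Finsupp.linearCombination_single, lc_multiset,
      Multiset.map_map, Rat.smul_def]
    rfl
  intro p1 p2 h
  have hcfeq : cf p1 = cf p2 := by
    apply hB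
    rw [hval, hval]; exact h
  have hx : p1.1 = p2.1 := by
    by_contra hxy
    have hne : e p1.1 ≠ e p2.1 := fun hc => hxy (he hc)
    have h1 := DFunLike.congr_fun hcfeq (e p1.1)
    simp only [hcf, Finsupp.add_apply, Finsupp.single_apply, if_pos rfl, reduceIte,
      if_neg hne.symm, Finsupp.mapRange_apply, Multiset.toFinsupp_apply] at h1
    rw [zero_add] at h1
    exact hq ((Multiset.count (e p1.1) (p2.2.map e) : ℤ)
      - (Multiset.count (e p1.1) (p1.2.map e) : ℤ)) (by push_cast; linarith)
  have hM : p1.2 = p2.2 := by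
    have h2 : Finsupp.mapRange (Nat.cast : ℕ → ℚ) Nat.cast_zero
        (Multiset.toFinsupp (p1.2.map e))
        = Finsupp.mapRange (Nat.cast : ℕ → ℚ) Nat.cast_zero
        (Multiset.toFinsupp (p2.2.map e)) := by
      have := hcfeq
      rw [hcf] at this
      simp only [hx] at this
      exact add_left_cancel this
    have h3 := Finsupp.mapRange_injective (Nat.cast : ℕ → ℚ) Nat.cast_zero
      Nat.cast_injective h2
    have h4 : p1.2.map e = p2.2.map e := Multiset.toFinsupp.injective h3
    exact Multiset.map_injective he h4
  exact Prod.ext hx hM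

/-- **CPA-augmented aggregation has 1-WL capacity** (core of Theorem 3).
Over a countable domain `X` and with a strictly positive gate `g ∈ ℝ^D`, there
exist a feature map `φ : X → ℝ^D` and `ε > 0` such that the gated aggregation
`h (x, M) = (1+ε) • φ x + g ⊙ ∑_{m ∈ M} φ m` is an injective function of the pair
(center element, neighbor multiset); consequently composing with any injective
`ψ : ℝ^D → ℝ^{D'}` keeps the aggregation injective. -/
theorem cpa_one_wl_capacity
    (X : Type*) [Countable X] (D : ℕ) (hD : 1 ≤ D)
    (g : Fin D → ℝ) (hg : ∀ r, 0 < g r) :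
    ∃ (φ : X → (Fin D → ℝ)) (ε : ℝ), 0 < ε ∧
      Function.Injective
        (fun p : X × Multiset X =>
          (1 + ε) • φ p.1 + g * (p.2.map φ).sum) ∧
      ∀ (D' : ℕ) (ψ : (Fin D → ℝ) → (Fin D' → ℝ)), Function.Injective ψ →
        Function.Injective
          (fun p : X × Multiset X =>
            ψ ((1 + ε) • φ p.1 + g * (p.2.map φ).sum)) := by
  obtain ⟨B, hB⟩ := exists_li_seq
  obtain ⟨e, he⟩ := Countable.exists_injective_nat X
  set r0 : Fin D := ⟨0, hD⟩ with hr0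
  set c : ℝ := g r0 with hc0
  have hc : 0 < c := hg r0
  set q : ℚ := (⌈c⁻¹⌉₊ : ℚ) + 1/2 with hqdef
  have hq : ∀ z : ℤ, (z : ℚ) ≠ q := by
    intro z hz
    rw [hqdef] at hz
    have h2 : (2 * z : ℤ) = 2 * (⌈c⁻¹⌉₊ : ℤ) + 1 := by
      have : (2 * z : ℚ) = 2 * (⌈c⁻¹⌉₊ : ℚ) + 1 := by rw [hz]; ring
      exact_mod_cast this
    omega
  set α : ℝ := (q : ℝ) with hαdef
  have hα : c⁻¹ < α := by
    rw [hαdef, hqdef]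
    push_cast
    have := Nat.le_ceil c⁻¹
    linarith
  set ε : ℝ := α * c - 1 with hεdef
  have hε : 0 < ε := by
    have h1 : c⁻¹ * c < α * c := by
      exact mul_lt_mul_of_pos_right hα hc
    rw [inv_mul_cancel₀ hc.ne'] at h1
    rw [hεdef]; linarith
  set φ : X → (Fin D → ℝ) := fun x => fun _ => c⁻¹ * B (e x) with hφdef
  have hcoord : ∀ p : X × Multiset X,
      ((1 + ε) • φ p.1 + g * (p.2.map φ).sum) r0
        = (q : ℝ) * B (e p.1) + ((p.2.map (fun m => B (e m))).sum) := by
    intro p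
    have hsum : ((p.2.map φ).sum) r0 = c⁻¹ * (p.2.map (fun m => B (e m))).sum := by
      have h1 := map_multiset_sum (Pi.evalAddMonoidHom (fun _ : Fin D => ℝ) r0)
        (p.2.map φ)
      simp only [Pi.evalAddMonoidHom_apply] at h1
      rw [h1, Multiset.map_map]
      rw [show ((fun f : Fin D → ℝ => f r0) ∘ φ) = fun m => c⁻¹ * B (e m) from rfl]
      rw [Multiset.sum_map_mul_left]
    simp only [Pi.add_apply, Pi.smul_apply, Pi.mul_apply, smul_eq_mul, hsum]
    have h1e : (1 + ε) = α * c := by rw [hεdef]; ring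
    rw [hφdef, h1e, ← hc0]
    have hcc : c * c⁻¹ = 1 := mul_inv_cancel₀ hc.ne'
    calc α * c * (c⁻¹ * B (e p.1)) + c * (c⁻¹ * (p.2.map (fun m => B (e m))).sum)
        = (c * c⁻¹) * (α * B (e p.1)) + (c * c⁻¹) * (p.2.map (fun m => B (e m))).sum := by
          ring
      _ = (q : ℝ) * B (e p.1) + ((p.2.map (fun m => B (e m))).sum) := by
          rw [hcc, hαdef]; ring
  have hinj : Function.Injective
      (fun p : X × Multiset X => (1 + ε) • φ p.1 + g * (p.2.map φ).sum) := by
    intro p1 p2 h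
    apply key_inj B hB e he q hq
    simp only []
    rw [← hcoord p1, ← hcoord p2]; exact congrFun h r0
  exact ⟨φ, ε, hε, hinj, fun D' ψ hψ => hψ.comp hinj⟩
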